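/- Let B ≥ 1 be an integer and let v, w : Fin B → ℝ be vectors with strictly positive entries such that v majorizes w. Then for every real q with 0 < q < 1, ∏_{i=1}^{B} (1 − q^{v_i}) ≤ ∏_{i=1}^{B} (1 − q^{w_i}). (Taking q = Ḡ(t) to be the common complementary CDF of a single worker's batch-completion time at time t, this says that the job compute time — the maximum over batches of the minimum over the v_i replicas — under assignment v is stochastically larger than under assignment w.) -/

import Mathlib

open Finset Real

lemma fin_le_orderEmb {m B : ℕ} (emb : Fin m ↪o Fin B) : ∀ j (h : j < m), j ≤ (emb ⟨j, h⟩ : ℕ) := by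
  intro j
  induction j with
  | zero => intro h; exact Nat.zero_le _
  | succ j ih =>
    intro h
    have hj : j < m := Nat.lt_of_succ_lt h
    have h1 : emb ⟨j, hj⟩ < emb ⟨j+1, h⟩ := emb.strictMono (by simp [Fin.lt_iff_val_lt_val])
    have := ih hj
    have := Fin.lt_iff_val_lt_val.mp h1
    omega

lemma sum_subset_le_sum_first {B m : ℕ} (hm : m ≤ B) (f : Fin B → ℝ) (hf : Antitone f)
    (S : Finset (Fin B)) (hS : S.card = m) :
    ∑ i ∈ S, f i ≤ ∑ k : Fin m, f (Fin.castLE hm k) := by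
  have hSeq : S = Finset.univ.map (S.orderEmbOfFin hS).toEmbedding := by
    apply Finset.coe_injective
    rw [Finset.coe_map]
    simp [Set.image_univ, Finset.range_orderEmbOfFin]
  rw [hSeq, Finset.sum_map]
  apply Finset.sum_le_sum
  intro k _
  apply hf
  rw [Fin.le_iff_val_le_val]
  simpa using fin_le_orderEmb (S.orderEmbOfFin hS) k.val k.isLt

noncomputable def Gd (q x : ℝ) : ℝ := (-Real.log q) * (q ^ x / (1 - q ^ x))

lemma one_sub_rpow_pos {q x : ℝ} (hq0 : 0 < q) (hq1 : q < 1) (hx : 0 < x) :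
    0 < 1 - q ^ x := by
  have := Real.rpow_lt_one hq0.le hq1 hx
  linarith

lemma hasDerivAt_g {q : ℝ} (hq0 : 0 < q) (hq1 : q < 1) {x : ℝ} (hx : 0 < x) :
    HasDerivAt (fun y => Real.log (1 - q ^ y)) (Gd q x) x := by
  have h1 : HasDerivAt (fun y : ℝ => q ^ y) (q ^ x * Real.log q) x :=
    (Real.hasStrictDerivAt_const_rpow hq0 x).hasDerivAt
  have h2 : HasDerivAt (fun y : ℝ => 1 - q ^ y) (-(q ^ x * Real.log q)) x := by
    have h2' := (hasDerivAt_const x (1:ℝ)).sub h1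
    rw [zero_sub] at h2'
    exact h2'
  have h3 := h2.log (ne_of_gt (one_sub_rpow_pos hq0 hq1 hx))
  convert h3 using 1
  unfold Gd
  field_simp

lemma Gd_antitone {q : ℝ} (hq0 : 0 < q) (hq1 : q < 1) {x y : ℝ} (hx : 0 < x) (hxy : x ≤ y) :
    Gd q y ≤ Gd q x := by
  have hy : 0 < y := lt_of_lt_of_le hx hxy
  have hqx1 : q ^ x < 1 := Real.rpow_lt_one hq0.le hq1 hx
  have hqy1 : q ^ y < 1 := Real.rpow_lt_one hq0.le hq1 hy
  have hqxpos : 0 < q ^ x := Real.rpow_pos_of_pos hq0 x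
  have hqypos : 0 < q ^ y := Real.rpow_pos_of_pos hq0 y
  have hle : q ^ y ≤ q ^ x := Real.rpow_le_rpow_of_exponent_ge hq0 hq1.le hxy
  have hlogq : 0 < -Real.log q := by
    have := Real.log_neg hq0 hq1
    linarith
  apply mul_le_mul_of_nonneg_left _ hlogq.le
  apply div_le_div₀ hqxpos.le hle (by linarith) (by linarith)

/-- tangent line inequality for the concave function `log (1 - q^·)` on positive reals -/
lemma tangent_le {q : ℝ} (hq0 : 0 < q) (hq1 : q < 1) {x y : ℝ} (hx : 0 < x) (hy : 0 < y) :
    Real.log (1 - q ^ y) ≤ Real.log (1 - q ^ x) + Gd q x * (y - x) := by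
  rcases lt_trichotomy x y with h | h | h
  · obtain ⟨c, hc, hceq⟩ := exists_hasDerivAt_eq_slope (fun z => Real.log (1 - q ^ z)) (Gd q) h
      (fun z hz => (hasDerivAt_g hq0 hq1 (lt_of_lt_of_le hx hz.1)).continuousAt.continuousWithinAt)
      (fun z hz => hasDerivAt_g hq0 hq1 (lt_trans hx hz.1))
    have hle : Gd q c ≤ Gd q x := Gd_antitone hq0 hq1 hx hc.1.le
    have hyx : 0 < y - x := by linarith
    have := (div_le_iff₀ hyx).mp (hceq ▸ hle)
    linarith
  · subst h; simp
  · obtain ⟨c, hc, hceq⟩ := exists_hasDerivAt_eq_slope (fun z => Real.log (1 - q ^ z)) (Gd q) h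
      (fun z hz => (hasDerivAt_g hq0 hq1 (lt_of_lt_of_le hy hz.1)).continuousAt.continuousWithinAt)
      (fun z hz => hasDerivAt_g hq0 hq1 (lt_trans hy hz.1))
    have hle : Gd q x ≤ Gd q c := Gd_antitone hq0 hq1 (lt_trans hy hc.1) hc.2.le
    have hxy : 0 < x - y := by linarith
    rw [hceq] at hle
    have := (le_div_iff₀ hxy).mp hle
    linarith

lemma abel_nonpos (n : ℕ) (φ d : ℕ → ℝ)
    (hφ : ∀ i, i + 1 < n → φ i ≤ φ (i + 1))
    (hD : ∀ m, m ≤ n → 0 ≤ ∑ i ∈ range m, d i)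
    (hDn : ∑ i ∈ range n, d i = 0) :
    ∑ i ∈ range n, φ i * d i ≤ 0 := by
  have h := Finset.sum_range_by_parts φ d n
  simp only [smul_eq_mul] at h
  rw [h, hDn, mul_zero, zero_sub, neg_nonpos]
  apply Finset.sum_nonneg
  intro i hi
  rw [Finset.mem_range] at hi
  have h1 : φ i ≤ φ (i + 1) := hφ i (by omega)
  have h2 : 0 ≤ ∑ j ∈ range (i + 1), d j := hD (i + 1) (by omega)
  nlinarith

lemma key_sorted (B : ℕ) (v w : Fin B → ℝ)
    (hv : ∀ i, 0 < v i) (hw : ∀ i, 0 < w i)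
    (hva : Antitone v) (hwa : Antitone w)
    (hsum : ∑ i, v i = ∑ i, w i)
    (hmaj : ∀ m : ℕ, 1 ≤ m → m ≤ B → ∀ S : Finset (Fin B), S.card = m →
      ∃ S' : Finset (Fin B), S'.card = m ∧ ∑ i ∈ S, w i ≤ ∑ i ∈ S', v i)
    (q : ℝ) (hq0 : 0 < q) (hq1 : q < 1) :
    ∏ i, (1 - q ^ (v i)) ≤ ∏ i, (1 - q ^ (w i)) := by
  -- it suffices to compare the sums of logs
  have hvpos : ∀ i, 0 < 1 - q ^ (v i) := fun i => one_sub_rpow_pos hq0 hq1 (hv i)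
  have hwpos : ∀ i, 0 < 1 - q ^ (w i) := fun i => one_sub_rpow_pos hq0 hq1 (hw i)
  have hprodv : ∏ i, (1 - q ^ (v i)) = Real.exp (∑ i, Real.log (1 - q ^ (v i))) := by
    rw [Real.exp_sum]
    exact Finset.prod_congr rfl fun i _ => (Real.exp_log (hvpos i)).symm
  have hprodw : ∏ i, (1 - q ^ (w i)) = Real.exp (∑ i, Real.log (1 - q ^ (w i))) := by
    rw [Real.exp_sum]
    exact Finset.prod_congr rfl fun i _ => (Real.exp_log (hwpos i)).symm
  rw [hprodv, hprodw, Real.exp_le_exp]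
  -- tangent line bound
  have h1 : ∑ i, Real.log (1 - q ^ (v i)) ≤
      ∑ i, (Real.log (1 - q ^ (w i)) + Gd q (w i) * (v i - w i)) :=
    Finset.sum_le_sum fun i _ => tangent_le hq0 hq1 (hw i) (hv i)
  rw [Finset.sum_add_distrib] at h1
  have h2 : ∑ i, Gd q (w i) * (v i - w i) ≤ 0 := by
    set φ : ℕ → ℝ := fun i => if h : i < B then Gd q (w ⟨i, h⟩) else 0 with hφdef
    set d : ℕ → ℝ := fun i => if h : i < B then v ⟨i, h⟩ - w ⟨i, h⟩ else 0 with hddef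
    have hconv : ∑ i, Gd q (w i) * (v i - w i) = ∑ i ∈ range B, φ i * d i := by
      rw [Finset.sum_range fun i => φ i * d i]
      exact Finset.sum_congr rfl fun i _ => by simp [hφdef, hddef, i.isLt]
    -- partial-sum dominance
    have hDm : ∀ m, m ≤ B → 0 ≤ ∑ i ∈ range m, d i := by
      intro m hm
      have hdsum : ∀ (f : Fin B → ℝ),
          ∑ i ∈ range m, (if h : i < B then f ⟨i, h⟩ else 0) = ∑ k : Fin m, f (Fin.castLE hm k) := by
        intro f
        rw [Finset.sum_range fun i => if h : i < B then f ⟨i, h⟩ else 0]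
        exact Finset.sum_congr rfl fun k _ => by
          simp only [dif_pos (lt_of_lt_of_le k.isLt hm)]
          rfl
      have hd' : ∑ i ∈ range m, d i =
          (∑ k : Fin m, v (Fin.castLE hm k)) - ∑ k : Fin m, w (Fin.castLE hm k) := by
        have : ∑ i ∈ range m, d i = ∑ i ∈ range m,
            ((if h : i < B then v ⟨i, h⟩ else 0) - (if h : i < B then w ⟨i, h⟩ else 0)) := by
          apply Finset.sum_congr rfl
          intro i hi
          by_cases h : i < B <;> simp [hddef, h]
        rw [this, Finset.sum_sub_distrib, hdsum v, hdsum w]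
      rw [hd', sub_nonneg]
      rcases Nat.eq_zero_or_pos m with hm0 | hm1
      · subst hm0; simp
      · -- sum of first m of w as a subset sum
        set S : Finset (Fin B) := Finset.univ.map (Fin.castLEEmb hm) with hSdef
        have hScard : S.card = m := by simp [hSdef]
        have hSw : ∑ k : Fin m, w (Fin.castLE hm k) = ∑ i ∈ S, w i := by
          rw [hSdef, Finset.sum_map]
          rfl
        obtain ⟨S', hS'card, hS'⟩ := hmaj m hm1 hm S hScard
        calc ∑ k : Fin m, w (Fin.castLE hm k) = ∑ i ∈ S, w i := hSw
          _ ≤ ∑ i ∈ S', v i := hS'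
          _ ≤ ∑ k : Fin m, v (Fin.castLE hm k) := sum_subset_le_sum_first hm v hva S' hS'card
    have hDn : ∑ i ∈ range B, d i = 0 := by
      have h0 := hDm B le_rfl
      have : ∑ i ∈ range B, d i = (∑ i, v i) - ∑ i, w i := by
        rw [Finset.sum_range fun i => d i]
        rw [← Finset.sum_sub_distrib]
        exact Finset.sum_congr rfl fun i _ => by simp [hddef, i.isLt]
      rw [this, hsum, sub_self]
    have hφmono : ∀ i, i + 1 < B → φ i ≤ φ (i + 1) := by
      intro i hi
      have hiB : i < B := Nat.lt_of_succ_lt hi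
      simp only [hφdef, dif_pos hi, dif_pos hiB]
      exact Gd_antitone hq0 hq1 (hw ⟨i+1, hi⟩)
        (hwa (show (⟨i, hiB⟩ : Fin B) ≤ ⟨i+1, hi⟩ by simp [Fin.le_iff_val_le_val]))
    rw [hconv]
    exact abel_nonpos B φ d hφmono hDm hDn
  linarith

/-- If `v` majorizes `w` (both with strictly positive entries), then for every `0 < q < 1`,
`∏ i, (1 - q ^ (v i)) ≤ ∏ i, (1 - q ^ (w i))` (real powers), i.e. the job compute time under
assignment `v` is stochastically larger than under assignment `w`. -/
theorem replication_majorization_stochastic_order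
    (B : ℕ) (hB : 1 ≤ B) (v w : Fin B → ℝ)
    (hv : ∀ i, 0 < v i) (hw : ∀ i, 0 < w i)
    (hsum : ∑ i, v i = ∑ i, w i)
    (hmaj : ∀ m : ℕ, 1 ≤ m → m ≤ B → ∀ S : Finset (Fin B), S.card = m →
      ∃ S' : Finset (Fin B), S'.card = m ∧ ∑ i ∈ S, w i ≤ ∑ i ∈ S', v i)
    (q : ℝ) (hq0 : 0 < q) (hq1 : q < 1) :
    ∏ i, (1 - q ^ (v i)) ≤ ∏ i, (1 - q ^ (w i)) := by
  -- sort both tuples decreasingly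
  set ev : Equiv.Perm (Fin B) := (Fin.revPerm.trans (Tuple.sort v)) with hevdef
  set ew : Equiv.Perm (Fin B) := (Fin.revPerm.trans (Tuple.sort w)) with hewdef
  set v' : Fin B → ℝ := v ∘ ev with hv'def
  set w' : Fin B → ℝ := w ∘ ew with hw'def
  have hva : Antitone v' := by
    intro i j hij
    exact Tuple.monotone_sort v (Fin.rev_le_rev.mpr hij)
  have hwa : Antitone w' := by
    intro i j hij
    exact Tuple.monotone_sort w (Fin.rev_le_rev.mpr hij)
  have hkey := key_sorted B v' w' (fun i => hv _) (fun i => hw _) hva hwa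
    (by rw [hv'def, hw'def]; simp only [Function.comp]
        rw [Equiv.sum_comp ev v, Equiv.sum_comp ew w]; exact hsum)
    (by intro m hm1 hmB S hS
        obtain ⟨T, hTcard, hT⟩ := hmaj m hm1 hmB (S.image ew)
          (by rw [Finset.card_image_of_injective _ ew.injective, hS])
        refine ⟨T.image ev.symm, by rw [Finset.card_image_of_injective _ ev.symm.injective, hTcard], ?_⟩
        have h1 : ∑ i ∈ S, w' i = ∑ i ∈ S.image ew, w i := by
          rw [Finset.sum_image (fun a _ b _ h => ew.injective h)]
          rfl
        have h2 : ∑ i ∈ T.image ev.symm, v' i = ∑ i ∈ T, v i := by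
          rw [Finset.sum_image (fun a _ b _ h => ev.symm.injective h)]
          exact Finset.sum_congr rfl fun i _ => by simp [hv'def]
        rw [h1, h2]; exact hT)
    q hq0 hq1
  calc ∏ i, (1 - q ^ (v i)) = ∏ i, (1 - q ^ (v' i)) := by
        rw [hv'def]; exact (Equiv.prod_comp ev fun i => (1 - q ^ (v i))).symm
    _ ≤ ∏ i, (1 - q ^ (w' i)) := hkey
    _ = ∏ i, (1 - q ^ (w i)) := by
        rw [hw'def]; exact Equiv.prod_comp ew fun i => (1 - q ^ (w i))
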